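/- No non-complete 4-critical graph contains two non-incident double-critical edges; that is, if G is a vertex-critical graph with χ(G) = 4 that is not a complete graph, and xy and vw are edges of G with {x,y} ∩ {v,w} = ∅, then χ(G − x − y) = 2 and χ(G − v − w) = 2 cannot both hold. -/

import Mathlib

open SimpleGraph

/-- A graph is vertex-critical if deleting any vertex decreases the chromatic number. -/
def VertexCritical {V : Type} (G : SimpleGraph V) : Prop :=
  ∀ v : V, (G.induce ({v}ᶜ : Set V)).chromaticNumber < G.chromaticNumber

/-- A vertex-critical graph is double-critical if deleting the two end-vertices of any
edge decreases the chromatic number by at least two. -/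
def DoubleCritical {V : Type} (G : SimpleGraph V) : Prop :=
  VertexCritical G ∧
  ∀ x y : V, G.Adj x y →
    (G.induce ({x, y}ᶜ : Set V)).chromaticNumber + 2 ≤ G.chromaticNumber

private lemma fin2_eq_of_ne {a b c : Fin 2} (h1 : a ≠ b) (h2 : c ≠ b) : a = c := by
  omega

/-- Key lemma: if `G - x - y` and `G - v - w` are 2-colorable, `x ~ y`, `v ~ w`,
the two pairs are disjoint and `x` is NOT adjacent to `v`, then `G` is 3-colorable. -/
private lemma key {V : Type} (G : SimpleGraph V) (x y v w : V)
    (hxy : G.Adj x y) (hvw : G.Adj v w)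
    (hxv : x ≠ v) (hxw : x ≠ w) (hyv : y ≠ v) (hyw : y ≠ w)
    (h1 : (G.induce ({x, y}ᶜ : Set V)).Colorable 2)
    (h2 : (G.induce ({v, w}ᶜ : Set V)).Colorable 2)
    (hnadj : ¬ G.Adj x v) : G.Colorable 3 := by
  classical
  obtain ⟨f⟩ := h1
  obtain ⟨g⟩ := h2
  have hxyne : x ≠ y := hxy.ne
  have hvwne : v ≠ w := hvw.ne
  have hmemA : ∀ u : V, u ≠ x → u ≠ y → u ∈ ({x, y}ᶜ : Set V) := by
    intro u hu1 hu2; simp [hu1, hu2]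
  have hmemB : ∀ u : V, u ≠ v → u ≠ w → u ∈ ({v, w}ᶜ : Set V) := by
    intro u hu1 hu2; simp [hu1, hu2]
  -- extend the colorings to all of V
  set F : V → Fin 2 := fun u => if h : u ∈ ({x, y}ᶜ : Set V) then f ⟨u, h⟩ else 0 with hFdef
  set Gg : V → Fin 2 := fun u => if h : u ∈ ({v, w}ᶜ : Set V) then g ⟨u, h⟩ else 0 with hGdef
  have hF : ∀ a b : V, a ≠ x → a ≠ y → b ≠ x → b ≠ y → G.Adj a b → F a ≠ F b := by
    intro a b ha1 ha2 hb1 hb2 hab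
    have hA := hmemA a ha1 ha2
    have hB := hmemA b hb1 hb2
    simp only [hFdef, dif_pos hA, dif_pos hB]
    exact f.valid (by exact hab)
  have hG : ∀ a b : V, a ≠ v → a ≠ w → b ≠ v → b ≠ w → G.Adj a b → Gg a ≠ Gg b := by
    intro a b ha1 ha2 hb1 hb2 hab
    have hA := hmemB a ha1 ha2
    have hB := hmemB b hb1 hb2
    simp only [hGdef, dif_pos hA, dif_pos hB]
    exact g.valid (by exact hab)
  have hFvw : F v ≠ F w := hF v w hxv.symm hyv.symm hxw.symm hyw.symm hvw
  have hGxy : Gg x ≠ Gg y := hG x y hxv hxw hyv hyw hxy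
  -- the explicit 3-coloring
  set c : V → Fin 3 := fun u =>
    if u = x then 0 else if u = v then 0 else if u = y then 1 else if u = w then 2
    else if F u = F v then (if Gg u = Gg x then 0 else 1)
    else (if Gg u = Gg x then 2 else 1) with hcdef
  have hcx : c x = 0 := by
    simp only [hcdef, eq_self_iff_true, if_true]
  have hcv : c v = 0 := by
    simp only [hcdef, if_neg (Ne.symm hxv), eq_self_iff_true, if_true]
  have hcy : c y = 1 := by
    simp only [hcdef, if_neg (Ne.symm hxyne), if_neg hyv, eq_self_iff_true, if_true]
  have hcw : c w = 2 := by
    simp only [hcdef, if_neg (Ne.symm hxw), if_neg (Ne.symm hvwne), if_neg (Ne.symm hyw),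
      eq_self_iff_true, if_true]
  have hcS : ∀ u : V, u ≠ x → u ≠ v → u ≠ y → u ≠ w →
      c u = (if F u = F v then (if Gg u = Gg x then 0 else 1)
             else (if Gg u = Gg x then 2 else 1)) := by
    intro u h1 h2 h3 h4
    simp only [hcdef]; rw [if_neg h1, if_neg h2, if_neg h3, if_neg h4]
  refine ⟨Coloring.mk c ?_⟩
  intro a b hab
  -- helper: an S-vertex adjacent to x has color 1
  have hSx : ∀ b : V, b ≠ x → b ≠ v → b ≠ y → b ≠ w → G.Adj x b → c b = 1 := by
    intro b hb1 hb2 hb3 hb4 hadj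
    have hg : Gg x ≠ Gg b := hG x b hxv hxw hb2 hb4 hadj
    have hGb : ¬ Gg b = Gg x := fun h => hg h.symm
    rw [hcS b hb1 hb2 hb3 hb4]
    by_cases hFb : F b = F v
    · rw [if_pos hFb, if_neg hGb]
    · rw [if_neg hFb, if_neg hGb]
  -- helper: an S-vertex adjacent to v has color ≠ 0
  have hSv : ∀ b : V, b ≠ x → b ≠ v → b ≠ y → b ≠ w → G.Adj v b → c b ≠ 0 := by
    intro b hb1 hb2 hb3 hb4 hadj
    have hf : F v ≠ F b := hF v b hxv.symm hyv.symm hb1 hb3 hadj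
    have hFb : ¬ F b = F v := fun h => hf h.symm
    rw [hcS b hb1 hb2 hb3 hb4, if_neg hFb]
    by_cases hGb : Gg b = Gg x
    · rw [if_pos hGb]; decide
    · rw [if_neg hGb]; decide
  -- helper: an S-vertex adjacent to y has color ≠ 1
  have hSy : ∀ b : V, b ≠ x → b ≠ v → b ≠ y → b ≠ w → G.Adj y b → c b ≠ 1 := by
    intro b hb1 hb2 hb3 hb4 hadj
    have hg : Gg y ≠ Gg b := hG y b hyv hyw hb2 hb4 hadj
    have hGb : Gg b = Gg x := fin2_eq_of_ne (fun h => hg h.symm) hGxy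
    rw [hcS b hb1 hb2 hb3 hb4]
    by_cases hFb : F b = F v
    · rw [if_pos hFb, if_pos hGb]; decide
    · rw [if_neg hFb, if_pos hGb]; decide
  -- helper: an S-vertex adjacent to w has color ≠ 2
  have hSw : ∀ b : V, b ≠ x → b ≠ v → b ≠ y → b ≠ w → G.Adj w b → c b ≠ 2 := by
    intro b hb1 hb2 hb3 hb4 hadj
    have hf : F w ≠ F b := hF w b hxw.symm hyw.symm hb1 hb3 hadj
    have hFb : F b = F v := fin2_eq_of_ne (fun h => hf h.symm) hFvw
    rw [hcS b hb1 hb2 hb3 hb4, if_pos hFb]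
    by_cases hGb : Gg b = Gg x
    · rw [if_pos hGb]; decide
    · rw [if_neg hGb]; decide
  by_cases hax : a = x
  · rw [hax] at hab ⊢
    by_cases hbv : b = v
    · rw [hbv] at hab; exact absurd hab hnadj
    by_cases hbx : b = x
    · rw [hbx] at hab; exact absurd hab (G.loopless.irrefl x)
    by_cases hby : b = y
    · rw [hby, hcx, hcy]; decide
    by_cases hbw : b = w
    · rw [hbw, hcx, hcw]; decide
    · rw [hcx, hSx b hbx hbv hby hbw hab]; decide
  by_cases hav : a = v
  · rw [hav] at hab ⊢
    by_cases hbx : b = x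
    · rw [hbx] at hab; exact absurd hab.symm hnadj
    by_cases hbv : b = v
    · rw [hbv] at hab; exact absurd hab (G.loopless.irrefl v)
    by_cases hby : b = y
    · rw [hby, hcv, hcy]; decide
    by_cases hbw : b = w
    · rw [hbw, hcv, hcw]; decide
    · rw [hcv]; exact fun h => hSv b hbx hbv hby hbw hab h.symm
  by_cases hay : a = y
  · rw [hay] at hab ⊢
    by_cases hbx : b = x
    · rw [hbx, hcy, hcx]; decide
    by_cases hbv : b = v
    · rw [hbv, hcy, hcv]; decide
    by_cases hby : b = y
    · rw [hby] at hab; exact absurd hab (G.loopless.irrefl y)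
    by_cases hbw : b = w
    · rw [hbw, hcy, hcw]; decide
    · rw [hcy]; exact fun h => hSy b hbx hbv hby hbw hab h.symm
  by_cases haw : a = w
  · rw [haw] at hab ⊢
    by_cases hbx : b = x
    · rw [hbx, hcw, hcx]; decide
    by_cases hbv : b = v
    · rw [hbv, hcw, hcv]; decide
    by_cases hby : b = y
    · rw [hby, hcw, hcy]; decide
    by_cases hbw : b = w
    · rw [hbw] at hab; exact absurd hab (G.loopless.irrefl w)
    · rw [hcw]; exact fun h => hSw b hbx hbv hby hbw hab h.symm
  -- now a is an S-vertex
  by_cases hbx : b = x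
  · rw [hbx] at hab ⊢; rw [hcx, hSx a hax hav hay haw hab.symm]; decide
  by_cases hbv : b = v
  · rw [hbv] at hab ⊢; rw [hcv]; exact hSv a hax hav hay haw hab.symm
  by_cases hby : b = y
  · rw [hby] at hab ⊢; rw [hcy]; exact hSy a hax hav hay haw hab.symm
  by_cases hbw : b = w
  · rw [hbw] at hab ⊢; rw [hcw]; exact hSw a hax hav hay haw hab.symm
  -- both a, b are S-vertices
  · have hf : F a ≠ F b := hF a b hax hay hbx hby hab
    have hg : Gg a ≠ Gg b := hG a b hav haw hbv hbw hab
    rw [hcS a hax hav hay haw, hcS b hbx hbv hby hbw]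
    by_cases hFa : F a = F v <;> by_cases hGa : Gg a = Gg x
    · have hFb : ¬ F b = F v := fun h => hf (hFa.trans h.symm)
      have hGb : ¬ Gg b = Gg x := fun h => hg (hGa.trans h.symm)
      rw [if_pos hFa, if_pos hGa, if_neg hFb, if_neg hGb]; decide
    · have hFb : ¬ F b = F v := fun h => hf (hFa.trans h.symm)
      have hGb : Gg b = Gg x := fin2_eq_of_ne hg.symm (fun h => hGa h.symm)
      rw [if_pos hFa, if_neg hGa, if_neg hFb, if_pos hGb]; decide
    · have hFb : F b = F v := fin2_eq_of_ne hf.symm (fun h => hFa h.symm)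
      have hGb : ¬ Gg b = Gg x := fun h => hg (hGa.trans h.symm)
      rw [if_neg hFa, if_pos hGa, if_pos hFb, if_neg hGb]; decide
    · have hFb : F b = F v := fin2_eq_of_ne hf.symm (fun h => hFa h.symm)
      have hGb : Gg b = Gg x := fin2_eq_of_ne hg.symm (fun h => hGa h.symm)
      rw [if_neg hFa, if_neg hGa, if_pos hFb, if_pos hGb]; decide

private lemma enat_le_three_of_lt_four {a : ℕ∞} (h : a < 4) : a ≤ 3 := by
  cases a using ENat.recTopCoe with
  | top => exact absurd h (by simp)
  | coe n =>
    have hn : n < 4 := by exact_mod_cast h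
    have : n ≤ 3 := by omega
    exact_mod_cast this

/-- No non-complete `4`-critical graph contains two non-incident double-critical edges:
if `xy` and `vw` are edges sharing no endpoint, then `χ(G - x - y) = 2` and
`χ(G - v - w) = 2` cannot both hold. -/
theorem stmt13 {V : Type} [Fintype V] (G : SimpleGraph V)
    (hcrit : VertexCritical G) (hchrom : G.chromaticNumber = 4) (hnc : G ≠ ⊤)
    (x y v w : V) (hxy : G.Adj x y) (hvw : G.Adj v w)
    (hxv : x ≠ v) (hxw : x ≠ w) (hyv : y ≠ v) (hyw : y ≠ w) :
    ¬ ((G.induce ({x, y}ᶜ : Set V)).chromaticNumber = 2 ∧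
       (G.induce ({v, w}ᶜ : Set V)).chromaticNumber = 2) := by
  rintro ⟨h1, h2⟩
  -- extract 2-colorability
  have h1c : (G.induce ({x, y}ᶜ : Set V)).Colorable 2 := by
    rw [← SimpleGraph.chromaticNumber_le_iff_colorable, h1]
    norm_num
  have h2c : (G.induce ({v, w}ᶜ : Set V)).Colorable 2 := by
    rw [← SimpleGraph.chromaticNumber_le_iff_colorable, h2]
    norm_num
  have h1c' : (G.induce ({y, x}ᶜ : Set V)).Colorable 2 := by
    rw [show ({y, x} : Set V) = {x, y} from Set.pair_comm y x]; exact h1c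
  have h2c' : (G.induce ({w, v}ᶜ : Set V)).Colorable 2 := by
    rw [show ({w, v} : Set V) = {v, w} from Set.pair_comm w v]; exact h2c
  -- if G is 3-colorable we get a contradiction
  have hno3 : ¬ G.Colorable 3 := by
    intro hc
    have h3 := hc.chromaticNumber_le
    rw [hchrom] at h3
    have : ((4 : ℕ) : ℕ∞) ≤ ((3 : ℕ) : ℕ∞) := by exact_mod_cast h3
    have : (4 : ℕ) ≤ 3 := by exact_mod_cast this
    omega
  -- hence all four "cross" edges are present
  have exv : G.Adj x v := by
    by_contra hn
    exact hno3 (key G x y v w hxy hvw hxv hxw hyv hyw h1c h2c hn)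
  have exw : G.Adj x w := by
    by_contra hn
    exact hno3 (key G x y w v hxy hvw.symm hxw hxv hyw hyv h1c h2c' hn)
  have eyv : G.Adj y v := by
    by_contra hn
    exact hno3 (key G y x v w hxy.symm hvw hyv hyw hxv hxw h1c' h2c hn)
  have eyw : G.Adj y w := by
    by_contra hn
    exact hno3 (key G y x w v hxy.symm hvw.symm hyw hyv hxw hxv h1c' h2c' hn)
  -- every vertex is one of x, y, v, w (else vertex-criticality fails)
  have hall : ∀ u : V, u = x ∨ u = y ∨ u = v ∨ u = w := by
    intro u
    by_contra hu
    push_neg at hu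
    obtain ⟨hux, huy, huv, huw⟩ := hu
    have h4 := hcrit u
    rw [hchrom] at h4
    have h3 : (G.induce ({u}ᶜ : Set V)).Colorable 3 := by
      rw [← SimpleGraph.chromaticNumber_le_iff_colorable]
      exact_mod_cast enat_le_three_of_lt_four h4
    obtain ⟨col⟩ := h3
    have hxU : x ∈ ({u}ᶜ : Set V) := by simp [Ne.symm hux]
    have hyU : y ∈ ({u}ᶜ : Set V) := by simp [Ne.symm huy]
    have hvU : v ∈ ({u}ᶜ : Set V) := by simp [Ne.symm huv]
    have hwU : w ∈ ({u}ᶜ : Set V) := by simp [Ne.symm huw]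
    have d1 : col ⟨x, hxU⟩ ≠ col ⟨y, hyU⟩ := col.valid (by exact hxy)
    have d2 : col ⟨x, hxU⟩ ≠ col ⟨v, hvU⟩ := col.valid (by exact exv)
    have d3 : col ⟨x, hxU⟩ ≠ col ⟨w, hwU⟩ := col.valid (by exact exw)
    have d4 : col ⟨y, hyU⟩ ≠ col ⟨v, hvU⟩ := col.valid (by exact eyv)
    have d5 : col ⟨y, hyU⟩ ≠ col ⟨w, hwU⟩ := col.valid (by exact eyw)
    have d6 : col ⟨v, hvU⟩ ≠ col ⟨w, hwU⟩ := col.valid (by exact hvw)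
    have pigeon : ∀ p q r s : Fin 3, p ≠ q → p ≠ r → p ≠ s → q ≠ r → q ≠ s → r ≠ s → False := by
      intro p q r s h1 h2 h3 h4 h5 h6
      omega
    exact pigeon _ _ _ _ d1 d2 d3 d4 d5 d6
  -- hence G is complete
  apply hnc
  ext a b
  simp only [SimpleGraph.top_adj]
  constructor
  · exact G.ne_of_adj
  · intro hne
    rcases hall a with rfl | rfl | rfl | rfl <;> rcases hall b with rfl | rfl | rfl | rfl <;>
      first
        | exact absurd rfl hne
        | exact hxy | exact hxy.symm | exact hvw | exact hvw.symm
        | exact exv | exact exv.symm | exact exw | exact exw.symm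
        | exact eyv | exact eyv.symm | exact eyw | exact eyw.symm
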